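/- For every integer n ≥ 0, the number of words in [2]^n avoiding the pattern 122 equals F_{n+3} - 1, where F_m denotes the m-th Fibonacci number (F_1 = F_2 = 1). -/

import Mathlib

/-- The `i`-th letter (1-based value in `{1,…,k}`) of a word `w ∈ [k]^n`,
with value `0` outside the word. -/
def letter {n k : ℕ} (w : Fin n → Fin k) (i : ℕ) : ℕ :=
  if h : i < n then (w ⟨i, h⟩ : ℕ) + 1 else 0

/-- `w` avoids the pattern 122: there is no 0-based index `i` with `i + 2 < n`
such that `w i < w (i+1)` and `w (i+1) = w (i+2)`. -/
def Avoids122 {n k : ℕ} (w : Fin n → Fin k) : Prop :=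
  ∀ i : ℕ, i + 2 < n →
    ¬ (letter w i < letter w (i + 1) ∧ letter w (i + 1) = letter w (i + 2))

namespace Stmt15Aux

lemma letter_cons_zero {n : ℕ} (a : Fin 2) (w : Fin n → Fin 2) :
    letter (Fin.cons a w) 0 = (a : ℕ) + 1 := by
  simp [letter]

lemma letter_cons_succ {n : ℕ} (a : Fin 2) (w : Fin n → Fin 2) (i : ℕ) :
    letter (Fin.cons a w) (i + 1) = letter w i := by
  unfold letter
  by_cases h : i < n
  · rw [dif_pos (by omega : i + 1 < n + 1), dif_pos h]
    have : (⟨i + 1, by omega⟩ : Fin (n + 1)) = Fin.succ ⟨i, h⟩ := rfl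
    rw [this, Fin.cons_succ]
  · rw [dif_neg (by omega), dif_neg h]

lemma letter_le {n : ℕ} (w : Fin n → Fin 2) (i : ℕ) : letter w i ≤ 2 := by
  unfold letter
  split
  · have := (w ⟨i, by assumption⟩).isLt; omega
  · omega

lemma letter_out {n : ℕ} (w : Fin n → Fin 2) (i : ℕ) (h : ¬ i < n) : letter w i = 0 := by
  unfold letter; rw [dif_neg h]

lemma avoids_cons {n : ℕ} (a : Fin 2) (w : Fin n → Fin 2) :
    Avoids122 (Fin.cons a w) ↔
      Avoids122 w ∧ ¬ ((a : ℕ) + 1 < letter w 0 ∧ letter w 0 = letter w 1) := by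
  constructor
  · intro h
    refine ⟨?_, ?_⟩
    · intro i hi
      have := h (i + 1) (by omega)
      simpa [letter_cons_succ] using this
    · by_cases hn : 2 < n + 1
      · have h0 := h 0 hn
        have e0 := letter_cons_zero a w
        have e1 := letter_cons_succ a w 0
        have e2 := letter_cons_succ a w 1
        norm_num at e1 e2
        rw [e0, e1, e2] at h0
        exact h0
      · rintro ⟨h1, h2⟩
        have : letter w 1 = 0 := letter_out w 1 (by omega)
        omega
  · rintro ⟨h1, h2⟩ i hi
    cases i with
    | zero =>
      have e0 := letter_cons_zero a w
      have e1 := letter_cons_succ a w 0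
      have e2 := letter_cons_succ a w 1
      norm_num at e1 e2
      rw [e0, e1, e2]
      exact h2
    | succ j =>
      have e1 := letter_cons_succ a w j
      have e2 := letter_cons_succ a w (j + 1)
      have e3 := letter_cons_succ a w (j + 2)
      intro hc
      refine h1 j (by omega) ?_
      constructor
      · rw [← e1, ← e2]; exact_mod_cast hc.1
      · have := hc.2
        rw [e2, e3] at this
        exact this

/-- "good start": avoids and does not start with 22. -/
def Q {n : ℕ} (w : Fin n → Fin 2) : Prop :=
  Avoids122 w ∧ ¬ (letter w 0 = 2 ∧ letter w 1 = 2)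

/-- avoids and does not start with 2. -/
def R {n : ℕ} (w : Fin n → Fin 2) : Prop :=
  Avoids122 w ∧ letter w 0 ≠ 2

lemma avoids_cons_one {n : ℕ} (w : Fin n → Fin 2) :
    Avoids122 (Fin.cons 1 w) ↔ Avoids122 w := by
  rw [avoids_cons]
  have := letter_le w 0
  constructor
  · exact fun h => h.1
  · intro h
    refine ⟨h, ?_⟩
    rintro ⟨h1, _⟩
    simp at h1
    omega
  -- note (1 : Fin 2) : ℕ = 1

lemma avoids_cons_zero {n : ℕ} (w : Fin n → Fin 2) :
    Avoids122 (Fin.cons 0 w) ↔ Q w := by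
  rw [avoids_cons]
  have h0 := letter_le w 0
  unfold Q
  constructor
  · rintro ⟨h1, h2⟩
    refine ⟨h1, ?_⟩
    rintro ⟨ha, hb⟩
    exact h2 ⟨by simp; omega, by omega⟩
  · rintro ⟨h1, h2⟩
    refine ⟨h1, ?_⟩
    rintro ⟨ha, hb⟩
    simp at ha
    exact h2 ⟨by omega, by omega⟩

lemma Q_cons_zero {n : ℕ} (w : Fin n → Fin 2) :
    Q (Fin.cons 0 w) ↔ Q w := by
  unfold Q
  rw [avoids_cons_zero]
  have e0 := letter_cons_zero 0 w
  constructor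
  · exact fun h => h.1
  · intro h
    refine ⟨h, ?_⟩
    rintro ⟨ha, _⟩
    rw [e0] at ha
    simp at ha

lemma Q_cons_one {n : ℕ} (w : Fin n → Fin 2) :
    Q (Fin.cons 1 w) ↔ R w := by
  unfold Q R
  rw [avoids_cons_one]
  have e0 := letter_cons_zero 1 w
  have e1 := letter_cons_succ 1 w 0
  norm_num at e1
  constructor
  · rintro ⟨h1, h2⟩
    refine ⟨h1, ?_⟩
    intro hc
    exact h2 ⟨by rw [e0]; norm_num, by rw [e1]; exact hc⟩
  · rintro ⟨h1, h2⟩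
    refine ⟨h1, ?_⟩
    rintro ⟨_, hb⟩
    rw [e1] at hb
    exact h2 hb

lemma R_cons_zero {n : ℕ} (w : Fin n → Fin 2) :
    R (Fin.cons 0 w) ↔ Q w := by
  unfold R
  rw [avoids_cons_zero]
  have e0 := letter_cons_zero 0 w
  constructor
  · exact fun h => h.1
  · intro h
    exact ⟨h, by rw [e0]; norm_num⟩

lemma R_cons_one {n : ℕ} (w : Fin n → Fin 2) :
    ¬ R (Fin.cons 1 w) := by
  rintro ⟨_, h2⟩
  exact h2 (by rw [letter_cons_zero]; norm_num)

/-- Splitting a count over functions `Fin (n+1) → Fin 2` by the first value. -/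
lemma card_cons_split {n : ℕ} (S : (Fin (n + 1) → Fin 2) → Prop) :
    Nat.card {w : Fin (n + 1) → Fin 2 // S w} =
      Nat.card {w : Fin n → Fin 2 // S (Fin.cons 0 w)} +
      Nat.card {w : Fin n → Fin 2 // S (Fin.cons 1 w)} := by
  rw [← Nat.card_sum]
  refine Nat.card_congr ?_
  refine ⟨fun w => if h : w.1 0 = 0 then
      Sum.inl ⟨Fin.tail w.1, by
        have hc : Fin.cons 0 (Fin.tail w.1) = w.1 := by
          rw [← h]; exact Fin.cons_self_tail w.1
        rw [hc]; exact w.2⟩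
    else
      Sum.inr ⟨Fin.tail w.1, by
        have h1 : w.1 0 = 1 := by omega
        have hc : Fin.cons 1 (Fin.tail w.1) = w.1 := by
          rw [← h1]; exact Fin.cons_self_tail w.1
        rw [hc]; exact w.2⟩,
    fun s => s.elim (fun w => ⟨Fin.cons 0 w.1, w.2⟩) (fun w => ⟨Fin.cons 1 w.1, w.2⟩),
    ?_, ?_⟩
  · intro w
    by_cases h : w.1 0 = 0
    · simp only [dif_pos h]
      apply Subtype.ext
      show Fin.cons 0 (Fin.tail w.1) = w.1
      rw [← h]; exact Fin.cons_self_tail w.1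
    · simp only [dif_neg h]
      apply Subtype.ext
      have h1 : w.1 0 = 1 := by omega
      show Fin.cons 1 (Fin.tail w.1) = w.1
      rw [← h1]; exact Fin.cons_self_tail w.1
  · rintro (⟨w, hw⟩ | ⟨w, hw⟩)
    · have h : (Fin.cons 0 w : Fin (n+1) → Fin 2) 0 = 0 := Fin.cons_zero _ _
      simp only [Sum.elim_inl]
      refine (dif_pos h).trans ?_
      congr 1
    · have h : (Fin.cons 1 w : Fin (n+1) → Fin 2) 0 = 1 := Fin.cons_zero _ _
      have h' : ¬ (Fin.cons 1 w : Fin (n+1) → Fin 2) 0 = 0 := by rw [h]; decide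
      simp only [Sum.elim_inr]
      refine (dif_neg h').trans ?_
      congr 1

lemma card_congr_pred {n : ℕ} {S T : (Fin n → Fin 2) → Prop} (h : ∀ w, S w ↔ T w) :
    Nat.card {w // S w} = Nat.card {w // T w} :=
  Nat.card_congr (Equiv.subtypeEquivRight h)

noncomputable def cP (n : ℕ) : ℕ := Nat.card {w : Fin n → Fin 2 // Avoids122 w}
noncomputable def cQ (n : ℕ) : ℕ := Nat.card {w : Fin n → Fin 2 // Q w}
noncomputable def cR (n : ℕ) : ℕ := Nat.card {w : Fin n → Fin 2 // R w}

lemma card_univ_zero {S : (Fin 0 → Fin 2) → Prop} (h : ∀ w, S w) :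
    Nat.card {w : Fin 0 → Fin 2 // S w} = 1 := by
  rw [Nat.card_congr (Equiv.subtypeUnivEquiv h)]
  simp [Nat.card_eq_fintype_card]

lemma cP_zero : cP 0 = 1 := card_univ_zero (fun w i hi => by omega)

lemma cQ_zero : cQ 0 = 1 := by
  refine card_univ_zero (fun w => ⟨fun i hi => by omega, ?_⟩)
  rintro ⟨h0, _⟩
  rw [letter_out w 0 (by omega)] at h0
  omega

lemma cR_zero : cR 0 = 1 := by
  refine card_univ_zero (fun w => ⟨fun i hi => by omega, ?_⟩)
  rw [letter_out w 0 (by omega)]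
  omega

lemma cP_succ (n : ℕ) : cP (n + 1) = cQ n + cP n := by
  rw [cP, card_cons_split, card_congr_pred avoids_cons_zero,
    card_congr_pred avoids_cons_one]
  rfl

lemma cQ_succ (n : ℕ) : cQ (n + 1) = cQ n + cR n := by
  rw [cQ, card_cons_split, card_congr_pred Q_cons_zero, card_congr_pred Q_cons_one]
  rfl

lemma cR_succ (n : ℕ) : cR (n + 1) = cQ n := by
  rw [cR, card_cons_split, card_congr_pred R_cons_zero]
  have : Nat.card {w : Fin n → Fin 2 // R (Fin.cons 1 w)} = 0 := by
    have : IsEmpty {w : Fin n → Fin 2 // R (Fin.cons 1 w)} :=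
      ⟨fun w => R_cons_one w.1 w.2⟩
    exact Nat.card_of_isEmpty
  rw [this]
  rfl

lemma cQ_fib (n : ℕ) : cQ n = Nat.fib (n + 2) ∧ cR n = Nat.fib (n + 1) := by
  induction n with
  | zero => exact ⟨cQ_zero, cR_zero⟩
  | succ m ih =>
    constructor
    · rw [cQ_succ, ih.1, ih.2]
      have h1 : Nat.fib (m + 1 + 2) = Nat.fib (m + 1) + Nat.fib (m + 2) := by
        have h := Nat.fib_add_two (n := m + 1)
        rw [show m + 1 + 1 = m + 2 by omega] at h
        exact h
      omega
    · rw [cR_succ, ih.1]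

lemma cP_fib (n : ℕ) : cP n = Nat.fib (n + 3) - 1 := by
  induction n with
  | zero => rw [cP_zero]; decide
  | succ m ih =>
    rw [cP_succ, ih, (cQ_fib m).1]
    have h1 : 1 ≤ Nat.fib (m + 3) := Nat.fib_pos.2 (by omega)
    have h2 : Nat.fib (m + 1 + 3) = Nat.fib (m + 2) + Nat.fib (m + 3) := by
      have h := Nat.fib_add_two (n := m + 2)
      rw [show m + 2 + 2 = m + 1 + 3 by omega, show m + 2 + 1 = m + 3 by omega] at h
      exact h
    omega

end Stmt15Aux

theorem stmt15 (n : ℕ) :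
    Nat.card {w : Fin n → Fin 2 // Avoids122 w} = Nat.fib (n + 3) - 1 :=
  Stmt15Aux.cP_fib n
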